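/- For letters a, b and nonempty words v, w in a quasi-shuffle algebra (k⟨A⟩, *), one has a(v*(b⋄w)) + a⋄(v*(bw)) + b((a⋄v)*w) + b⋄((av)*w) = (av)*(b⋄w) + (a⋄v)*(bw) + 2(a⋄b)(v*w). -/
import Mathlib


/-!
Quasi-shuffle algebras (Hoffman–Ihara).  We model the span `kA` of the alphabet
(with its commutative associative product `⋄`, written `*` in `L`) as a
non-unital commutative `k`-algebra `L`, and the word algebra `k⟨A⟩` as the
tensor algebra `TensorAlgebra k L`, in which a word `a₁⋯aₙ` is the product
`ι a₁ * ⋯ * ι aₙ`.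
-/

open TensorAlgebra

variable (k : Type*) [Field k]
variable {L : Type*} [NonUnitalCommRing L] [Module k L]
  [SMulCommClass k L L] [IsScalarTower k L L]

/-- The word `a₁⋯aₙ` as an element of the tensor algebra. -/
def word (l : List L) : TensorAlgebra k L := (l.map fun a => TensorAlgebra.ι k a).prod


set_option linter.unusedSectionVars false

lemma word_nil' : word k ([] : List L) = 1 := rfl

lemma word_cons' (c : L) (u : List L) :
    word k (c :: u) = TensorAlgebra.ι k c * word k u := by simp [word]

/-- The span of all words. -/
def Wspan : Submodule k (TensorAlgebra k L) := Submodule.span k (Set.range (word k))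

lemma word_mem_W (u : List L) : word k u ∈ Wspan k (L := L) :=
  Submodule.subset_span ⟨u, rfl⟩

lemma mul_mem_W (c : L) {x : TensorAlgebra k L} (hx : x ∈ Wspan k) :
    TensorAlgebra.ι k c * x ∈ Wspan k := by
  induction hx using Submodule.span_induction with
  | mem y hy => obtain ⟨u, rfl⟩ := hy; rw [← word_cons']; exact word_mem_W k _
  | zero => simpa using (Wspan k (L := L)).zero_mem
  | add y z _ _ hy hz => rw [mul_add]; exact (Wspan k).add_mem hy hz
  | smul r y _ hy => rw [Algebra.mul_smul_comm]; exact (Wspan k).smul_mem r hy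

lemma m_mem_W
    (m : TensorAlgebra k L →ₗ[k] TensorAlgebra k L →ₗ[k] TensorAlgebra k L)
    (hmul : ∀ x, m 1 x = x) (hmur : ∀ x, m x 1 = x)
    (hmrec : ∀ (a b : L) (v w : List L),
      m (TensorAlgebra.ι k a * word k v) (TensorAlgebra.ι k b * word k w)
        = TensorAlgebra.ι k a * m (word k v) (TensorAlgebra.ι k b * word k w)
          + TensorAlgebra.ι k b * m (TensorAlgebra.ι k a * word k v) (word k w)
          + TensorAlgebra.ι k (a * b) * m (word k v) (word k w)) :
    ∀ v w : List L, m (word k v) (word k w) ∈ Wspan k := by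
  intro v
  induction v with
  | nil => intro w; rw [word_nil', hmul]; exact word_mem_W k w
  | cons c v' ihv =>
    intro w
    induction w with
    | nil => rw [word_nil', hmur]; exact word_mem_W k _
    | cons d w' ihw =>
      rw [word_cons' k c v', word_cons' k d w', hmrec]
      refine (Wspan k).add_mem ((Wspan k).add_mem ?_ ?_) ?_
      · exact mul_mem_W k c (by rw [← word_cons' k d]; exact ihv (d :: w'))
      · exact mul_mem_W k d (by rw [← word_cons' k c]; exact ihw)
      · exact mul_mem_W k _ (ihv w')

lemma D_mul_W (D : L → TensorAlgebra k L →ₗ[k] TensorAlgebra k L)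
    (hDw : ∀ (a c : L) (u : List L),
      D a (TensorAlgebra.ι k c * word k u) = TensorAlgebra.ι k (a * c) * word k u)
    (a c : L) {x : TensorAlgebra k L} (hx : x ∈ Wspan k) :
    D a (TensorAlgebra.ι k c * x) = TensorAlgebra.ι k (a * c) * x := by
  induction hx using Submodule.span_induction with
  | mem y hy => obtain ⟨u, rfl⟩ := hy; exact hDw a c u
  | zero => simp
  | add y z _ _ hy hz => rw [mul_add, map_add, hy, hz, mul_add]
  | smul r y _ hy => rw [Algebra.mul_smul_comm, map_smul, hy, Algebra.mul_smul_comm]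


/--
For letters `a, b` and nonempty words `v, w` in a quasi-shuffle
algebra `(k⟨A⟩, *)`:
`a(v*(b⋄w)) + a⋄(v*(bw)) + b((a⋄v)*w) + b⋄((av)*w)
   = (av)*(b⋄w) + (a⋄v)*(bw) + 2(a⋄b)(v*w)`.
-/
theorem stmt2
    (m : TensorAlgebra k L →ₗ[k] TensorAlgebra k L →ₗ[k] TensorAlgebra k L)
    (hmul : ∀ x, m 1 x = x) (hmur : ∀ x, m x 1 = x)
    (hmrec : ∀ (a b : L) (v w : List L),
      m (TensorAlgebra.ι k a * word k v) (TensorAlgebra.ι k b * word k w)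
        = TensorAlgebra.ι k a * m (word k v) (TensorAlgebra.ι k b * word k w)
          + TensorAlgebra.ι k b * m (TensorAlgebra.ι k a * word k v) (word k w)
          + TensorAlgebra.ι k (a * b) * m (word k v) (word k w))
    (D : L → TensorAlgebra k L →ₗ[k] TensorAlgebra k L)
    (hD1 : ∀ a : L, D a 1 = 0)
    (hDw : ∀ (a c : L) (u : List L),
      D a (TensorAlgebra.ι k c * word k u) = TensorAlgebra.ι k (a * c) * word k u) :
    ∀ (a b : L) (v w : List L), v ≠ [] → w ≠ [] →
      TensorAlgebra.ι k a * m (word k v) (D b (word k w))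
        + D a (m (word k v) (word k (b :: w)))
        + TensorAlgebra.ι k b * m (D a (word k v)) (word k w)
        + D b (m (word k (a :: v)) (word k w))
      = m (word k (a :: v)) (D b (word k w))
        + m (D a (word k v)) (word k (b :: w))
        + 2 • (TensorAlgebra.ι k (a * b) * m (word k v) (word k w)) := by
  intro a b v w hv hw
  obtain ⟨c, v', rfl⟩ := List.exists_cons_of_ne_nil hv
  obtain ⟨d, w', rfl⟩ := List.exists_cons_of_ne_nil hw
  have hW := m_mem_W k m hmul hmur hmrec
  have hDb : D b (word k (d :: w')) = TensorAlgebra.ι k (b * d) * word k w' := by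
    rw [word_cons']; exact hDw b d w'
  have hDa : D a (word k (c :: v')) = TensorAlgebra.ι k (a * c) * word k v' := by
    rw [word_cons']; exact hDw a c v'
  have h2 : m (word k (c :: v')) (word k (b :: d :: w'))
      = TensorAlgebra.ι k c * m (word k v') (word k (b :: d :: w'))
        + TensorAlgebra.ι k b * m (word k (c :: v')) (word k (d :: w'))
        + TensorAlgebra.ι k (c * b) * m (word k v') (word k (d :: w')) := by
    rw [word_cons' k c, word_cons' k b, hmrec, ← word_cons' k b, ← word_cons' k c]
  have h2' : D a (m (word k (c :: v')) (word k (b :: d :: w')))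
      = TensorAlgebra.ι k (a * c) * m (word k v') (word k (b :: d :: w'))
        + TensorAlgebra.ι k (a * b) * m (word k (c :: v')) (word k (d :: w'))
        + TensorAlgebra.ι k (a * (c * b)) * m (word k v') (word k (d :: w')) := by
    rw [h2, map_add, map_add, D_mul_W k D hDw a c (hW _ _),
      D_mul_W k D hDw a b (hW _ _), D_mul_W k D hDw a (c * b) (hW _ _)]
  have h4 : m (word k (a :: c :: v')) (word k (d :: w'))
      = TensorAlgebra.ι k a * m (word k (c :: v')) (word k (d :: w'))
        + TensorAlgebra.ι k d * m (word k (a :: c :: v')) (word k w')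
        + TensorAlgebra.ι k (a * d) * m (word k (c :: v')) (word k w') := by
    rw [word_cons' k a, word_cons' k d, hmrec, ← word_cons' k a, ← word_cons' k d]
  have h4' : D b (m (word k (a :: c :: v')) (word k (d :: w')))
      = TensorAlgebra.ι k (b * a) * m (word k (c :: v')) (word k (d :: w'))
        + TensorAlgebra.ι k (b * d) * m (word k (a :: c :: v')) (word k w')
        + TensorAlgebra.ι k (b * (a * d)) * m (word k (c :: v')) (word k w') := by
    rw [h4, map_add, map_add, D_mul_W k D hDw b a (hW _ _),
      D_mul_W k D hDw b d (hW _ _), D_mul_W k D hDw b (a * d) (hW _ _)]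
  have hR1 : m (word k (a :: c :: v')) (TensorAlgebra.ι k (b * d) * word k w')
      = TensorAlgebra.ι k a * m (word k (c :: v')) (TensorAlgebra.ι k (b * d) * word k w')
        + TensorAlgebra.ι k (b * d) * m (word k (a :: c :: v')) (word k w')
        + TensorAlgebra.ι k (a * (b * d)) * m (word k (c :: v')) (word k w') := by
    rw [word_cons' k a, hmrec, ← word_cons' k a]
  have hR2 : m (TensorAlgebra.ι k (a * c) * word k v') (word k (b :: d :: w'))
      = TensorAlgebra.ι k (a * c) * m (word k v') (word k (b :: d :: w'))
        + TensorAlgebra.ι k b * m (TensorAlgebra.ι k (a * c) * word k v') (word k (d :: w'))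
        + TensorAlgebra.ι k ((a * c) * b) * m (word k v') (word k (d :: w')) := by
    rw [word_cons' k b, hmrec, ← word_cons' k b]
  rw [hDa, hDb, h2', h4', hR1, hR2, mul_assoc a c b, mul_left_comm b a d, mul_comm b a]
  abel
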